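/- Let n ≥ 3 and m ≥ 1 be integers, k > 0, and set a := (n−2)k − m and b := m(2k+1) − (n−2)k². Assume k + a ≠ 0, let N := (a²−b)/(2(k+a)), and assume a − N ≠ 0. Let c ∈ ℝ and c₁, c₂, c₃ > 0, and on the half-line I := {ξ ∈ ℝ : (a−N)ξ + c > 0} define f(ξ) := c₁((a−N)ξ+c)^{−1/(a−N)}, h(ξ) := c₂((a−N)ξ+c)^{−N/(a−N)}, and φ(ξ) := c₃((a−N)ξ+c)^{−k/(a−N)}. Then on I the following three equations hold: (n−2)fhφ'' − fφh'' − mhφf'' − 2mhφ'f' − 2fφ'h' = 0; fhφφ'' − (n−1)fh(φ')² + mhφφ'f' + fφφ'h' = 0; and −fhφ²f'' + (n−2)fhφφ'f' − (m−1)hφ²(f')² − fφ²f'h' = 0. -/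

import Mathlib

theorem aux1 (d c C p : ℝ) {ξ : ℝ} (hξ : 0 < d * ξ + c) :
    HasDerivAt (fun t => C * (d * t + c) ^ p) (C * p * d * (d * ξ + c) ^ (p - 1)) ξ := by
  have h1 : HasDerivAt (fun t : ℝ => d * t + c) d ξ := by
    simpa using ((hasDerivAt_id ξ).const_mul d).add_const c
  have h2 := (Real.hasDerivAt_rpow_const (p := p) (Or.inl hξ.ne')).comp ξ h1
  have h3 := h2.const_mul C
  have e : C * p * d * (d * ξ + c) ^ (p - 1) = C * (p * (d * ξ + c) ^ (p - 1) * d) := by ring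
  rw [e]; exact h3

theorem aux2 (d c C p : ℝ) {ξ : ℝ} (hξ : 0 < d * ξ + c) :
    deriv (deriv (fun t => C * (d * t + c) ^ p)) ξ
      = C * p * d * (p - 1) * d * (d * ξ + c) ^ (p - 2) := by
  have hopen : IsOpen {t : ℝ | 0 < d * t + c} :=
    isOpen_lt continuous_const (by continuity)
  have hev : deriv (fun t => C * (d * t + c) ^ p)
      =ᶠ[nhds ξ] fun t => (C * p * d) * (d * t + c) ^ (p - 1) := by
    exact Filter.eventuallyEq_of_mem (hopen.mem_nhds hξ) fun t ht => (aux1 d c C p ht).deriv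
  rw [hev.deriv_eq, (aux1 d c (C * p * d) (p - 1) hξ).deriv]
  have : p - 1 - 1 = p - 2 := by ring
  rw [this]

/-- The case `r = 1`: with `N = (a²−b)/(2(k+a))`, the explicit
power-law functions `f, h, φ` solve the three translation-invariant quasi-Einstein
equations (ρ = 0, Ricci-flat fiber, r = 1) on the half-line where `(a−N)ξ + c > 0`. -/
theorem stmt7 (n m : ℕ) (hn : 3 ≤ n) (hm : 1 ≤ m) (k : ℝ) (hk : 0 < k)
    (a b : ℝ) (ha : a = (n - 2 : ℝ) * k - m) (hb : b = m * (2 * k + 1) - (n - 2 : ℝ) * k ^ 2)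
    (hka : k + a ≠ 0)
    (N : ℝ) (hN : N = (a ^ 2 - b) / (2 * (k + a)))
    (hane : a - N ≠ 0)
    (c c₁ c₂ c₃ : ℝ) (hc₁ : 0 < c₁) (hc₂ : 0 < c₂) (hc₃ : 0 < c₃)
    (f h φ : ℝ → ℝ)
    (hf : ∀ ξ, f ξ = c₁ * ((a - N) * ξ + c) ^ (-(1 / (a - N))))
    (hh : ∀ ξ, h ξ = c₂ * ((a - N) * ξ + c) ^ (-(N / (a - N))))
    (hφ : ∀ ξ, φ ξ = c₃ * ((a - N) * ξ + c) ^ (-(k / (a - N)))) :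
    ∀ ξ : ℝ, 0 < (a - N) * ξ + c →
      ((n - 2 : ℝ) * f ξ * h ξ * deriv (deriv φ) ξ - f ξ * φ ξ * deriv (deriv h) ξ
        - m * h ξ * φ ξ * deriv (deriv f) ξ - 2 * m * h ξ * deriv φ ξ * deriv f ξ
        - 2 * f ξ * deriv φ ξ * deriv h ξ = 0) ∧
      (f ξ * h ξ * φ ξ * deriv (deriv φ) ξ - (n - 1 : ℝ) * f ξ * h ξ * (deriv φ ξ) ^ 2
        + m * h ξ * φ ξ * deriv φ ξ * deriv f ξ + f ξ * φ ξ * deriv φ ξ * deriv h ξ = 0) ∧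
      (-(f ξ) * h ξ * (φ ξ) ^ 2 * deriv (deriv f) ξ
        + (n - 2 : ℝ) * f ξ * h ξ * φ ξ * deriv φ ξ * deriv f ξ
        - (m - 1 : ℝ) * h ξ * (φ ξ) ^ 2 * (deriv f ξ) ^ 2
        - f ξ * (φ ξ) ^ 2 * deriv f ξ * deriv h ξ = 0) := by
  intro ξ hx
  have hfe : f = fun t => c₁ * ((a - N) * t + c) ^ (-(1 / (a - N))) := funext hf
  have hhe : h = fun t => c₂ * ((a - N) * t + c) ^ (-(N / (a - N))) := funext hh
  have hφe : φ = fun t => c₃ * ((a - N) * t + c) ^ (-(k / (a - N))) := funext hφ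
  subst hfe hhe hφe
  set x : ℝ := (a - N) * ξ + c with hxdef
  have hxne : x ≠ 0 := hx.ne'
  have hN2 : N * (2 * (k + a)) = a ^ 2 - b := by
    rw [hN]; field_simp
  -- first derivatives
  have Df : deriv (fun t => c₁ * ((a - N) * t + c) ^ (-(1 / (a - N)))) ξ
      = (-c₁) * (x ^ (-(1 / (a - N))) / x) := by
    rw [(aux1 (a - N) c c₁ (-(1 / (a - N))) hx).deriv,
      Real.rpow_sub hx, Real.rpow_one]
    field_simp
  have Dh : deriv (fun t => c₂ * ((a - N) * t + c) ^ (-(N / (a - N)))) ξ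
      = (-(N * c₂)) * (x ^ (-(N / (a - N))) / x) := by
    rw [(aux1 (a - N) c c₂ (-(N / (a - N))) hx).deriv,
      Real.rpow_sub hx, Real.rpow_one]
    field_simp
  have Dφ : deriv (fun t => c₃ * ((a - N) * t + c) ^ (-(k / (a - N)))) ξ
      = (-(k * c₃)) * (x ^ (-(k / (a - N))) / x) := by
    rw [(aux1 (a - N) c c₃ (-(k / (a - N))) hx).deriv,
      Real.rpow_sub hx, Real.rpow_one]
    field_simp
  -- second derivatives
  have sub2 : ∀ p : ℝ, x ^ (p - 2) = x ^ p / x ^ 2 := by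
    intro p
    rw [Real.rpow_sub hx, Real.rpow_two]
  have DDf : deriv (deriv (fun t => c₁ * ((a - N) * t + c) ^ (-(1 / (a - N))))) ξ
      = (c₁ * (1 + (a - N))) * (x ^ (-(1 / (a - N))) / x ^ 2) := by
    rw [aux2 (a - N) c c₁ (-(1 / (a - N))) hx, sub2]
    field_simp; ring
  have DDh : deriv (deriv (fun t => c₂ * ((a - N) * t + c) ^ (-(N / (a - N))))) ξ
      = (c₂ * N * a) * (x ^ (-(N / (a - N))) / x ^ 2) := by
    rw [aux2 (a - N) c c₂ (-(N / (a - N))) hx, sub2]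
    field_simp; ring
  have DDφ : deriv (deriv (fun t => c₃ * ((a - N) * t + c) ^ (-(k / (a - N))))) ξ
      = (c₃ * k * (k + (a - N))) * (x ^ (-(k / (a - N))) / x ^ 2) := by
    rw [aux2 (a - N) c c₃ (-(k / (a - N))) hx, sub2]
    field_simp; ring
  simp only [Df, Dh, Dφ, DDf, DDh, DDφ]
  set u : ℝ := x ^ (-(1 / (a - N))) with hu
  set v : ℝ := x ^ (-(N / (a - N))) with hv
  set w : ℝ := x ^ (-(k / (a - N))) with hw
  clear_value u v w
  clear_value x
  have key1 : (n - 2 : ℝ) * k * (k + (a - N)) - N * a - m * (1 + (a - N))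
      - 2 * m * k - 2 * k * N = 0 := by
    linear_combination (N - a) * ha + hb - hN2
  have key2 : k * (k + (a - N)) - (n - 1 : ℝ) * k ^ 2 + m * k + k * N = 0 := by
    linear_combination k * ha
  have key3 : -(1 + (a - N)) + (n - 2 : ℝ) * k - ((m : ℝ) - 1) - N = 0 := by
    linear_combination -ha
  refine ⟨?_, ?_, ?_⟩
  · linear_combination (c₁ * c₂ * c₃ * u * v * w / x ^ 2) * key1
  · linear_combination (c₁ * c₂ * c₃ ^ 2 * u * v * w ^ 2 / x ^ 2) * key2
  · linear_combination (c₁ ^ 2 * c₂ * c₃ ^ 2 * u ^ 2 * v * w ^ 2 / x ^ 2) * key3
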